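/- In the algebra A with basis {e_0,…,e_n}, products e_0² = e_0 + e_n, e_0e_i = ½e_i (1 ≤ i ≤ n) and all other products zero, the span Ke_n is an ideal, and the quotient A/Ke_n is isomorphic to the gametic algebra G(n,2). -/

import Mathlib

/-- In the algebra with basis e_0,…,e_n, e_0² = e_0 + e_n, e_0e_i = ½e_i and all
other products zero, Ke_n is an ideal and the quotient A/Ke_n is isomorphic to the
gametic algebra G(n,2) (equivalently there is a surjective multiplicative linear
map A → G(n,2) whose kernel is Ke_n). -/
theorem quotient_iso_gametic {K A B : Type*} [Field K]
    [NonUnitalNonAssocCommRing A] [Module K A] [SMulCommClass K A A] [IsScalarTower K A A]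
    [NonUnitalNonAssocCommRing B] [Module K B] [SMulCommClass K B B] [IsScalarTower K B B]
    (h2 : (2 : K) ≠ 0) (n : ℕ) (hn : 1 ≤ n)
    (e : Module.Basis (Fin (n + 1)) K A)
    (h00 : e 0 * e 0 = e 0 + e ⟨n, Nat.lt_succ_self n⟩)
    (h0i : ∀ i : Fin (n + 1), 1 ≤ (i : ℕ) → e 0 * e i = (2 : K)⁻¹ • e i)
    (hij : ∀ i j : Fin (n + 1), 1 ≤ (i : ℕ) → 1 ≤ (j : ℕ) → e i * e j = 0)
    (f : Module.Basis (Fin n) K B)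
    (hf00 : f ⟨0, hn⟩ * f ⟨0, hn⟩ = f ⟨0, hn⟩)
    (hf0i : ∀ i : Fin n, 1 ≤ (i : ℕ) → f ⟨0, hn⟩ * f i = (2 : K)⁻¹ • f i)
    (hfij : ∀ i j : Fin n, 1 ≤ (i : ℕ) → 1 ≤ (j : ℕ) → f i * f j = 0) :
    (∀ x : A, x * e ⟨n, Nat.lt_succ_self n⟩ ∈
        Submodule.span K {e ⟨n, Nat.lt_succ_self n⟩}) ∧
    ∃ φ : A →ₗ[K] B, (∀ x y : A, φ (x * y) = φ x * φ y) ∧ Function.Surjective φ ∧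
      LinearMap.ker φ = Submodule.span K {e ⟨n, Nat.lt_succ_self n⟩} := by
  classical
  set en : Fin (n + 1) := ⟨n, Nat.lt_succ_self n⟩ with hen
  have hen1 : 1 ≤ (en : ℕ) := hn
  constructor
  · -- Ke_n is an ideal
    intro x
    have hx : x ∈ Submodule.span K (Set.range e) := by
      rw [e.span_eq]; trivial
    induction hx using Submodule.span_induction with
    | mem z hz =>
        obtain ⟨i, rfl⟩ := hz
        rcases Nat.eq_zero_or_pos (i : ℕ) with h0 | h1
        · have : i = 0 := Fin.ext (by simpa using h0)
          subst this
          rw [h0i en hen1]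
          exact Submodule.smul_mem _ _ (Submodule.mem_span_singleton_self _)
        · rw [hij i en h1 hen1]
          exact Submodule.zero_mem _
    | zero => rw [zero_mul]; exact Submodule.zero_mem _
    | add x y _ _ hx hy => rw [add_mul]; exact Submodule.add_mem _ hx hy
    | smul c x _ hx => rw [smul_mul_assoc]; exact Submodule.smul_mem _ _ hx
  · -- the map
    set g : Fin (n + 1) → B := fun i =>
      if h : (i : ℕ) < n then f ⟨i, h⟩ else 0 with hg
    set φ : A →ₗ[K] B := e.constr K g with hφ
    have key : ∀ i, φ (e i) = g i := fun i => e.constr_basis K g i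
    have gcast : ∀ i : Fin n, g i.castSucc = f i := by
      intro i
      simp [hg, i.isLt]
    have glast : g en = 0 := by simp [hg, hen]
    have glast' : g (Fin.last n) = 0 := by simp [hg]
    have g0 : g 0 = f ⟨0, hn⟩ := by
      simp [hg, show (0 : ℕ) < n from hn]
    -- multiplicativity on basis vectors
    have aux0 : ∀ j : Fin (n + 1), 1 ≤ (j : ℕ) →
        φ (e 0 * e j) = φ (e 0) * φ (e j) := by
      intro j hj
      rw [h0i j hj, map_smul, key, key, g0]
      by_cases hjn : (j : ℕ) < n
      · rw [hg]
        simp only [dif_pos hjn]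
        rw [hf0i ⟨j, hjn⟩ hj]
      · rw [hg]
        simp only [dif_neg hjn]
        simp
    have hmul : ∀ i j : Fin (n + 1), φ (e i * e j) = φ (e i) * φ (e j) := by
      intro i j
      rcases Nat.eq_zero_or_pos (i : ℕ) with hi0 | hi1
      · have hi : i = 0 := Fin.ext (by simpa using hi0)
        subst hi
        rcases Nat.eq_zero_or_pos (j : ℕ) with hj0 | hj1
        · have hj : j = 0 := Fin.ext (by simpa using hj0)
          subst hj
          rw [h00, map_add, key, key, g0, glast, add_zero, hf00]
        · exact aux0 j hj1
      · rcases Nat.eq_zero_or_pos (j : ℕ) with hj0 | hj1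
        · have hj : j = 0 := Fin.ext (by simpa using hj0)
          subst hj
          rw [mul_comm (e i) (e 0), mul_comm (φ (e i)) (φ (e 0))]
          exact aux0 i hi1
        · rw [hij i j hi1 hj1, map_zero, key, key, hg]
          by_cases hin : (i : ℕ) < n
          · by_cases hjn : (j : ℕ) < n
            · simp only [dif_pos hin, dif_pos hjn]
              rw [hfij ⟨i, hin⟩ ⟨j, hjn⟩ hi1 hj1]
            · simp only [dif_pos hin, dif_neg hjn, mul_zero]
          · simp only [dif_neg hin, zero_mul]
    have hbil : ∀ x y : A, φ (x * y) = φ x * φ y := by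
      have heq : (LinearMap.mul K A).compr₂ φ =
          ((LinearMap.mul K B).compl₁₂ φ φ) := by
        apply e.ext; intro i; apply e.ext; intro j
        simpa using hmul i j
      intro x y
      have := LinearMap.congr_fun (LinearMap.congr_fun heq x) y
      simpa using this
    refine ⟨φ, hbil, ?_, ?_⟩
    · -- surjective
      rw [← LinearMap.range_eq_top, ← top_le_iff, ← f.span_eq, Submodule.span_le]
      rintro _ ⟨i, rfl⟩
      exact ⟨e i.castSucc, by rw [key, gcast]⟩
    · -- kernel
      apply le_antisymm
      · intro x hx
        have hx0 : φ x = 0 := hx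
        have hrep : φ x = f.equivFun.symm (fun i => e.repr x i.castSucc) := by
          rw [f.equivFun_symm_apply]
          calc φ x = φ (∑ i : Fin (n + 1), e.repr x i • e i) := by
                rw [e.sum_repr]
            _ = ∑ i : Fin (n + 1), e.repr x i • g i := by
                rw [map_sum]
                exact Finset.sum_congr rfl fun i _ => by rw [map_smul, key]
            _ = ∑ i : Fin n, e.repr x i.castSucc • f i := by
                rw [Fin.sum_univ_castSucc]
                simp only [glast', smul_zero, add_zero]
                exact Finset.sum_congr rfl fun i _ => by rw [gcast]
        have hcoord : ∀ i : Fin n, e.repr x i.castSucc = 0 := by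
          have h0 : f.equivFun.symm (fun i => e.repr x i.castSucc) =
              f.equivFun.symm 0 := by
            rw [← hrep, hx0, map_zero]
          have hfn := f.equivFun.symm.injective h0
          intro i
          exact congrFun hfn i
        have hx' : x = e.repr x (Fin.last n) • e (Fin.last n) := by
          conv_lhs => rw [← e.sum_repr x]
          rw [Fin.sum_univ_castSucc]
          simp [hcoord]
        rw [hx']
        exact Submodule.smul_mem _ _ (Submodule.mem_span_singleton_self _)
      · rw [Submodule.span_le, Set.singleton_subset_iff]
        refine LinearMap.mem_ker.mpr ?_
        rw [key en, glast]
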